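/- Let ε, ξ, η ∈ ℝ and let ρ̃, w̃, φ̃, j̃₁, j̃₂ be real-valued differentiable functions of (x,y) ∈ ℝ². Define I₁ := 2( ξ ∂_x(j̃₁+j̃₂) + η ∂_y(j̃₂−j̃₁) ) ρ̃ + 2ε²( ξ ∂_x(j̃₁+j̃₂) + η ∂_y(j̃₂−j̃₁) ) w̃ + ( ξ ∂_x(j̃₂−j̃₁) + η ∂_y(j̃₁+j̃₂) ) φ̃ and I₂ := ( 2ξ ∂_x(ρ̃+ε²w̃) + η ∂_y φ̃ )(j̃₁+j̃₂) + ( ξ ∂_x φ̃ + 2η ∂_y(ρ̃+ε²w̃) )(j̃₂−j̃₁). Then pointwise I₁ + I₂ = ξ ∂_x( (j̃₂−j̃₁) φ̃ ) + η ∂_y( (j̃₁+j̃₂) φ̃ ) + 2ξ ∂_x( (ρ̃+ε²w̃)(j̃₁+j̃₂) ) + 2η ∂_y( (ρ̃+ε²w̃)(j̃₂−j̃₁) ); in particular, if all these functions are 1-periodic in both x and y, then ∫₀¹∫₀¹ (I₁+I₂) dx dy = 0. -/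

import Mathlib

open MeasureTheory

private lemma sliceX (F : ℝ → ℝ → ℝ) (hF : ContDiff ℝ 1 (fun p : ℝ × ℝ => F p.1 p.2))
    (x y : ℝ) : HasDerivAt (fun x' => F x' y) (deriv (fun x' => F x' y) x) x := by
  have h : DifferentiableAt ℝ (fun x' => F x' y) x :=
    ((hF.differentiable one_ne_zero) (x, y)).comp (f := fun x' => (x', y)) x
      (differentiableAt_id.prodMk (differentiableAt_const y))
  exact h.hasDerivAt

private lemma sliceY (F : ℝ → ℝ → ℝ) (hF : ContDiff ℝ 1 (fun p : ℝ × ℝ => F p.1 p.2))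
    (x y : ℝ) : HasDerivAt (fun y' => F x y') (deriv (fun y' => F x y') y) y := by
  have h : DifferentiableAt ℝ (fun y' => F x y') y :=
    ((hF.differentiable one_ne_zero) (x, y)).comp (f := fun y' => (x, y')) y
      ((differentiableAt_const x).prodMk differentiableAt_id)
  exact h.hasDerivAt

private lemma contDx (F : ℝ → ℝ → ℝ) (hF : ContDiff ℝ 1 (fun p : ℝ × ℝ => F p.1 p.2)) :
    Continuous (fun p : ℝ × ℝ => deriv (fun x' => F x' p.2) p.1) := by
  have key : ∀ p : ℝ × ℝ, deriv (fun x' => F x' p.2) p.1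
      = fderiv ℝ (fun q : ℝ × ℝ => F q.1 q.2) p (1, 0) := by
    intro p
    have hc : HasDerivAt (fun x' : ℝ => ((x', p.2) : ℝ × ℝ)) (1, 0) p.1 :=
      (hasDerivAt_id p.1).prodMk (hasDerivAt_const p.1 p.2)
    have := (((hF.differentiable one_ne_zero) p).hasFDerivAt).comp_hasDerivAt p.1 hc
    exact this.deriv
  simp only [key]
  exact (hF.continuous_fderiv one_ne_zero).clm_apply continuous_const

private lemma contDy (F : ℝ → ℝ → ℝ) (hF : ContDiff ℝ 1 (fun p : ℝ × ℝ => F p.1 p.2)) :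
    Continuous (fun p : ℝ × ℝ => deriv (fun y' => F p.1 y') p.2) := by
  have key : ∀ p : ℝ × ℝ, deriv (fun y' => F p.1 y') p.2
      = fderiv ℝ (fun q : ℝ × ℝ => F q.1 q.2) p (0, 1) := by
    intro p
    have hc : HasDerivAt (fun y' : ℝ => ((p.1, y') : ℝ × ℝ)) (0, 1) p.2 :=
      (hasDerivAt_const p.2 p.1).prodMk (hasDerivAt_id p.2)
    have := (((hF.differentiable one_ne_zero) p).hasFDerivAt).comp_hasDerivAt p.2 hc
    exact this.deriv
  simp only [key]
  exact (hF.continuous_fderiv one_ne_zero).clm_apply continuous_const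

private lemma innerX_zero (F : ℝ → ℝ → ℝ) (hF : ContDiff ℝ 1 (fun p : ℝ × ℝ => F p.1 p.2))
    (hper : ∀ y, Function.Periodic (fun x => F x y) 1) (y : ℝ) :
    (∫ x in (0:ℝ)..1, deriv (fun x' => F x' y) x) = 0 := by
  have hdiff : ∀ x ∈ Set.uIcc (0:ℝ) 1, DifferentiableAt ℝ (fun x' => F x' y) x :=
    fun x _ => (sliceX F hF x y).differentiableAt
  have hcont : Continuous (fun x => deriv (fun x' => F x' y) x) :=
    (contDx F hF).comp (continuous_id.prodMk continuous_const)
  rw [intervalIntegral.integral_deriv_eq_sub hdiff (hcont.intervalIntegrable 0 1)]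
  have := hper y 0
  simp only [zero_add] at this
  simp [this]

private lemma innerY_zero (F : ℝ → ℝ → ℝ) (hF : ContDiff ℝ 1 (fun p : ℝ × ℝ => F p.1 p.2))
    (hper : ∀ x, Function.Periodic (fun y => F x y) 1) (x : ℝ) :
    (∫ y in (0:ℝ)..1, deriv (fun y' => F x y') y) = 0 := by
  have hdiff : ∀ y ∈ Set.uIcc (0:ℝ) 1, DifferentiableAt ℝ (fun y' => F x y') y :=
    fun y _ => (sliceY F hF x y).differentiableAt
  have hcont : Continuous (fun y => deriv (fun y' => F x y') y) :=
    (contDy F hF).comp (continuous_const.prodMk continuous_id)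
  rw [intervalIntegral.integral_deriv_eq_sub hdiff (hcont.intervalIntegrable 0 1)]
  have := hper x 0
  simp only [zero_add] at this
  simp [this]

private lemma fubini_unit_square (G : ℝ × ℝ → ℝ) (hG : Continuous G) :
    (∫ y in (0:ℝ)..1, ∫ x in (0:ℝ)..1, G (x, y))
      = ∫ x in (0:ℝ)..1, ∫ y in (0:ℝ)..1, G (x, y) := by
  have h01 : (0:ℝ) ≤ 1 := zero_le_one
  rw [intervalIntegral.integral_of_le h01, intervalIntegral.integral_of_le h01]
  simp_rw [intervalIntegral.integral_of_le h01]
  have hint : Integrable (Function.uncurry (fun y x => G (x, y)))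
      ((volume.restrict (Set.Ioc (0:ℝ) 1)).prod (volume.restrict (Set.Ioc (0:ℝ) 1))) := by
    rw [Measure.prod_restrict]
    have hcont : Continuous (Function.uncurry (fun y x : ℝ => G (x, y))) :=
      hG.comp (continuous_snd.prodMk continuous_fst)
    have hcompact : IsCompact (Set.Icc (0:ℝ) 1 ×ˢ Set.Icc (0:ℝ) 1) :=
      isCompact_Icc.prod isCompact_Icc
    have : IntegrableOn (Function.uncurry (fun y x : ℝ => G (x, y)))
        (Set.Icc (0:ℝ) 1 ×ˢ Set.Icc (0:ℝ) 1) volume :=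
      hcont.continuousOn.integrableOn_compact hcompact
    exact this.mono_set (Set.prod_mono Set.Ioc_subset_Icc_self Set.Ioc_subset_Icc_self)
  exact integral_integral_swap hint

/-- The double integral of a divergence `∂ₓP + ∂_yQ` over the unit cell vanishes
for data periodic in the corresponding directions. -/
private lemma div_integral_zero (P Q : ℝ → ℝ → ℝ)
    (hP : ContDiff ℝ 1 (fun p : ℝ × ℝ => P p.1 p.2))
    (hQ : ContDiff ℝ 1 (fun p : ℝ × ℝ => Q p.1 p.2))
    (hPx : ∀ y, Function.Periodic (fun x => P x y) 1)
    (hQy : ∀ x, Function.Periodic (fun y => Q x y) 1) :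
    (∫ y in (0:ℝ)..1, ∫ x in (0:ℝ)..1,
      (deriv (fun x' => P x' y) x + deriv (fun y' => Q x y') y)) = 0 := by
  have step1 : ∀ y : ℝ,
      (∫ x in (0:ℝ)..1, (deriv (fun x' => P x' y) x + deriv (fun y' => Q x y') y))
        = ∫ x in (0:ℝ)..1, deriv (fun y' => Q x y') y := by
    intro y
    have hI1 : IntervalIntegrable (fun x => deriv (fun x' => P x' y) x) volume 0 1 :=
      (((contDx P hP).comp (continuous_id.prodMk continuous_const)).intervalIntegrable 0 1)
    have hI2 : IntervalIntegrable (fun x => deriv (fun y' => Q x y') y) volume 0 1 :=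
      (((contDy Q hQ).comp (continuous_id.prodMk continuous_const)).intervalIntegrable 0 1)
    rw [intervalIntegral.integral_add hI1 hI2, innerX_zero P hP hPx y, zero_add]
  simp only [step1]
  have hswap := fubini_unit_square (fun p : ℝ × ℝ => deriv (fun y' => Q p.1 y') p.2)
    (contDy Q hQ)
  simp only [] at hswap
  rw [hswap]
  simp only [innerY_zero Q hQ hQy]
  simp

/-- The sum of cross terms `I₁` arising from the density, correction and
anisotropy energy identities in the two-dimensional refined error analysis. -/
noncomputable def crossI₁ (ε ξ η : ℝ) (ρ w φ j₁ j₂ : ℝ → ℝ → ℝ) (x y : ℝ) : ℝ :=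
  2 * (ξ * deriv (fun x' => j₁ x' y + j₂ x' y) x
        + η * deriv (fun y' => j₂ x y' - j₁ x y') y) * ρ x y
    + 2 * ε ^ 2 * (ξ * deriv (fun x' => j₁ x' y + j₂ x' y) x
        + η * deriv (fun y' => j₂ x y' - j₁ x y') y) * w x y
    + (ξ * deriv (fun x' => j₂ x' y - j₁ x' y) x
        + η * deriv (fun y' => j₁ x y' + j₂ x y') y) * φ x y

/-- The sum of cross terms `I₂` arising from the two flux energy identities in
the two-dimensional refined error analysis. -/
noncomputable def crossI₂ (ε ξ η : ℝ) (ρ w φ j₁ j₂ : ℝ → ℝ → ℝ) (x y : ℝ) : ℝ :=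
  (2 * ξ * deriv (fun x' => ρ x' y + ε ^ 2 * w x' y) x
      + η * deriv (fun y' => φ x y') y) * (j₁ x y + j₂ x y)
    + (ξ * deriv (fun x' => φ x' y) x
        + 2 * η * deriv (fun y' => ρ x y' + ε ^ 2 * w x y') y)
      * (j₂ x y - j₁ x y)

/-- Pointwise, `I₁ + I₂` is a divergence; in particular its integral over the
periodic cell `[0,1]²` vanishes for 1-periodic data. -/
theorem cross_terms_divergence_2d
    (ε ξ η : ℝ) (ρ w φ j₁ j₂ : ℝ → ℝ → ℝ)
    (hρ : ContDiff ℝ 1 (fun p : ℝ × ℝ => ρ p.1 p.2))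
    (hw : ContDiff ℝ 1 (fun p : ℝ × ℝ => w p.1 p.2))
    (hφ : ContDiff ℝ 1 (fun p : ℝ × ℝ => φ p.1 p.2))
    (hj₁ : ContDiff ℝ 1 (fun p : ℝ × ℝ => j₁ p.1 p.2))
    (hj₂ : ContDiff ℝ 1 (fun p : ℝ × ℝ => j₂ p.1 p.2)) :
    -- pointwise divergence identity
    (∀ x y : ℝ,
      crossI₁ ε ξ η ρ w φ j₁ j₂ x y + crossI₂ ε ξ η ρ w φ j₁ j₂ x y
        = ξ * deriv (fun x' => (j₂ x' y - j₁ x' y) * φ x' y) x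
          + η * deriv (fun y' => (j₁ x y' + j₂ x y') * φ x y') y
          + 2 * ξ * deriv
              (fun x' => (ρ x' y + ε ^ 2 * w x' y) * (j₁ x' y + j₂ x' y)) x
          + 2 * η * deriv
              (fun y' => (ρ x y' + ε ^ 2 * w x y') * (j₂ x y' - j₁ x y')) y)
    -- vanishing of the integral under 1-periodicity in x and y
    ∧ ((∀ y, Function.Periodic (fun x => ρ x y) 1) →
        (∀ x, Function.Periodic (fun y => ρ x y) 1) →
        (∀ y, Function.Periodic (fun x => w x y) 1) →
        (∀ x, Function.Periodic (fun y => w x y) 1) →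
        (∀ y, Function.Periodic (fun x => φ x y) 1) →
        (∀ x, Function.Periodic (fun y => φ x y) 1) →
        (∀ y, Function.Periodic (fun x => j₁ x y) 1) →
        (∀ x, Function.Periodic (fun y => j₁ x y) 1) →
        (∀ y, Function.Periodic (fun x => j₂ x y) 1) →
        (∀ x, Function.Periodic (fun y => j₂ x y) 1) →
        (∫ y in (0:ℝ)..1, ∫ x in (0:ℝ)..1,
          (crossI₁ ε ξ η ρ w φ j₁ j₂ x y
            + crossI₂ ε ξ η ρ w φ j₁ j₂ x y)) = 0) := by
  
  have hpt : ∀ x y : ℝ,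
      crossI₁ ε ξ η ρ w φ j₁ j₂ x y + crossI₂ ε ξ η ρ w φ j₁ j₂ x y
        = ξ * deriv (fun x' => (j₂ x' y - j₁ x' y) * φ x' y) x
          + η * deriv (fun y' => (j₁ x y' + j₂ x y') * φ x y') y
          + 2 * ξ * deriv
              (fun x' => (ρ x' y + ε ^ 2 * w x' y) * (j₁ x' y + j₂ x' y)) x
          + 2 * η * deriv
              (fun y' => (ρ x y' + ε ^ 2 * w x y') * (j₂ x y' - j₁ x y')) y := by
    intro x y
    have h1x := sliceX j₁ hj₁ x y
    have h2x := sliceX j₂ hj₂ x y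
    have hρx := sliceX ρ hρ x y
    have hwx := sliceX w hw x y
    have hφx := sliceX φ hφ x y
    have h1y := sliceY j₁ hj₁ x y
    have h2y := sliceY j₂ hj₂ x y
    have hρy := sliceY ρ hρ x y
    have hwy := sliceY w hw x y
    have hφy := sliceY φ hφ x y
    have e1 := (h1x.add h2x).deriv
    have e2 := (h2y.sub h1y).deriv
    have e3 := (h2x.sub h1x).deriv
    have e4 := (h1y.add h2y).deriv
    have e5 := (hρx.add (HasDerivAt.const_mul (ε ^ 2) hwx)).deriv
    have e6 := (hρy.add (HasDerivAt.const_mul (ε ^ 2) hwy)).deriv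
    have e7 := ((h2x.sub h1x).mul hφx).deriv
    have e8 := ((h1y.add h2y).mul hφy).deriv
    have e9 := ((hρx.add (HasDerivAt.const_mul (ε ^ 2) hwx)).mul (h1x.add h2x)).deriv
    have e10 := ((hρy.add (HasDerivAt.const_mul (ε ^ 2) hwy)).mul (h2y.sub h1y)).deriv
    simp only [Pi.add_def, Pi.sub_def, Pi.mul_def] at e1 e2 e3 e4 e5 e6 e7 e8 e9 e10
    simp only [crossI₁, crossI₂, e1, e2, e3, e4, e5, e6, e7, e8, e9, e10]
    ring
  refine ⟨hpt, ?_⟩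
  intro hρ1 hρ2 hw1 hw2 hφ1 hφ2 hj11 hj12 hj21 hj22
  -- combined C¹ regularity of the flux potentials
  have hPc : ContDiff ℝ 1 (fun p : ℝ × ℝ =>
      ξ * ((j₂ p.1 p.2 - j₁ p.1 p.2) * φ p.1 p.2)
        + 2 * ξ * ((ρ p.1 p.2 + ε ^ 2 * w p.1 p.2) * (j₁ p.1 p.2 + j₂ p.1 p.2))) :=
    (contDiff_const.mul ((hj₂.sub hj₁).mul hφ)).add
      (contDiff_const.mul ((hρ.add (contDiff_const.mul hw)).mul (hj₁.add hj₂)))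
  have hQc : ContDiff ℝ 1 (fun p : ℝ × ℝ =>
      η * ((j₁ p.1 p.2 + j₂ p.1 p.2) * φ p.1 p.2)
        + 2 * η * ((ρ p.1 p.2 + ε ^ 2 * w p.1 p.2) * (j₂ p.1 p.2 - j₁ p.1 p.2))) :=
    (contDiff_const.mul ((hj₁.add hj₂).mul hφ)).add
      (contDiff_const.mul ((hρ.add (contDiff_const.mul hw)).mul (hj₂.sub hj₁)))
  have hPper : ∀ y, Function.Periodic (fun x =>
      ξ * ((j₂ x y - j₁ x y) * φ x y)
        + 2 * ξ * ((ρ x y + ε ^ 2 * w x y) * (j₁ x y + j₂ x y))) 1 := by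
    intro y x
    simp only []
    have a1 : j₂ (x + 1) y = j₂ x y := hj21 y x
    have a2 : j₁ (x + 1) y = j₁ x y := hj11 y x
    have a3 : φ (x + 1) y = φ x y := hφ1 y x
    have a4 : ρ (x + 1) y = ρ x y := hρ1 y x
    have a5 : w (x + 1) y = w x y := hw1 y x
    rw [a1, a2, a3, a4, a5]
  have hQper : ∀ x, Function.Periodic (fun y =>
      η * ((j₁ x y + j₂ x y) * φ x y)
        + 2 * η * ((ρ x y + ε ^ 2 * w x y) * (j₂ x y - j₁ x y))) 1 := by
    intro x y
    simp only []
    have a1 : j₂ x (y + 1) = j₂ x y := hj22 x y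
    have a2 : j₁ x (y + 1) = j₁ x y := hj12 x y
    have a3 : φ x (y + 1) = φ x y := hφ2 x y
    have a4 : ρ x (y + 1) = ρ x y := hρ2 x y
    have a5 : w x (y + 1) = w x y := hw2 x y
    rw [a1, a2, a3, a4, a5]
  have hdiv := div_integral_zero
    (fun x y => ξ * ((j₂ x y - j₁ x y) * φ x y)
        + 2 * ξ * ((ρ x y + ε ^ 2 * w x y) * (j₁ x y + j₂ x y)))
    (fun x y => η * ((j₁ x y + j₂ x y) * φ x y)
        + 2 * η * ((ρ x y + ε ^ 2 * w x y) * (j₂ x y - j₁ x y)))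
    hPc hQc hPper hQper
  refine Eq.trans ?_ hdiv
  apply intervalIntegral.integral_congr
  intro y _
  simp only []
  apply intervalIntegral.integral_congr
  intro x _
  simp only []
  rw [hpt x y]
  have h7 := sliceX (fun x y => (j₂ x y - j₁ x y) * φ x y) ((hj₂.sub hj₁).mul hφ) x y
  have h9 := sliceX (fun x y => (ρ x y + ε ^ 2 * w x y) * (j₁ x y + j₂ x y))
    ((hρ.add (contDiff_const.mul hw)).mul (hj₁.add hj₂)) x y
  have h8 := sliceY (fun x y => (j₁ x y + j₂ x y) * φ x y) ((hj₁.add hj₂).mul hφ) x y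
  have h10 := sliceY (fun x y => (ρ x y + ε ^ 2 * w x y) * (j₂ x y - j₁ x y))
    ((hρ.add (contDiff_const.mul hw)).mul (hj₂.sub hj₁)) x y
  have ePx : deriv (fun x' => ξ * ((j₂ x' y - j₁ x' y) * φ x' y)
        + 2 * ξ * ((ρ x' y + ε ^ 2 * w x' y) * (j₁ x' y + j₂ x' y))) x
      = ξ * deriv (fun x' => (j₂ x' y - j₁ x' y) * φ x' y) x
        + 2 * ξ * deriv (fun x' => (ρ x' y + ε ^ 2 * w x' y) * (j₁ x' y + j₂ x' y)) x :=
    HasDerivAt.deriv ((HasDerivAt.const_mul ξ h7).add (HasDerivAt.const_mul (2 * ξ) h9))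
  have eQy : deriv (fun y' => η * ((j₁ x y' + j₂ x y') * φ x y')
        + 2 * η * ((ρ x y' + ε ^ 2 * w x y') * (j₂ x y' - j₁ x y'))) y
      = η * deriv (fun y' => (j₁ x y' + j₂ x y') * φ x y') y
        + 2 * η * deriv (fun y' => (ρ x y' + ε ^ 2 * w x y') * (j₂ x y' - j₁ x y')) y :=
    HasDerivAt.deriv ((HasDerivAt.const_mul η h8).add (HasDerivAt.const_mul (2 * η) h10))
  rw [ePx, eQy]
  ring
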